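/- Prior propriety for the hierarchical shrinkage prior with $g \equiv 1$, $\beta > 0$: the integral $\int_0^\infty t^{\alpha-1} e^{-\beta t} \left\{\frac{\Gamma(t + a_0)}{\Gamma(t + a_0 + a_\cdot)}\right\}^N dt$ is finite if and only if either $a_0 > 0$, or $a_0 = 0$ and $\alpha > N$, where $\alpha > 0$, $\beta > 0$, $a_0 \ge 0$, $a_\cdot > 0$, and $N \in \mathbb{N}$. -/

import Mathlib

open MeasureTheory Set

namespace PriorPropAux

lemma gamma_contAt {s : ℝ} (hs : 0 < s) : ContinuousAt Real.Gamma s :=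
  (Real.differentiableAt_Gamma fun m =>
    ((neg_nonpos.mpr (Nat.cast_nonneg m)).trans_lt hs).ne').continuousAt

lemma ratio_le_one {a x : ℝ} (ha : 0 < a) (hx : 2 ≤ x) :
    Real.Gamma x / Real.Gamma (x + a) ≤ 1 := by
  rw [div_le_one (Real.Gamma_pos_of_pos (by linarith))]
  exact Real.Gamma_strictMonoOn_Ici.monotoneOn hx
    (by simp only [mem_Ici]; linarith) (by linarith)

lemma contAt_q {b c β : ℝ} (N : ℕ) {t : ℝ} (hb : 0 < t + b) (hc : 0 < t + c) :
    ContinuousAt (fun t : ℝ => Real.exp (-β * t) *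
      (Real.Gamma (t + b) / Real.Gamma (t + c)) ^ N) t := by
  have h1 : ContinuousAt (fun t : ℝ => Real.Gamma (t + b)) t :=
    ContinuousAt.comp (x := t) (g := Real.Gamma) (f := fun t : ℝ => t + b)
      (gamma_contAt hb) (by fun_prop)
  have h2 : ContinuousAt (fun t : ℝ => Real.Gamma (t + c)) t :=
    ContinuousAt.comp (x := t) (g := Real.Gamma) (f := fun t : ℝ => t + c)
      (gamma_contAt hc) (by fun_prop)
  exact (by fun_prop : ContinuousAt (fun t : ℝ => Real.exp (-β * t)) t).mul
    ((h1.div h2 (Real.Gamma_pos_of_pos hc).ne').pow N)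

lemma g_contOn (N : ℕ) (α β a₀ adot : ℝ) (ha₀ : 0 ≤ a₀) (hadot : 0 < adot) :
    ContinuousOn (fun t : ℝ => t ^ (α - 1) * Real.exp (-β * t) *
      (Real.Gamma (t + a₀) / Real.Gamma (t + a₀ + adot)) ^ N) (Ioi 0) := by
  intro t ht
  have ht0 : (0:ℝ) < t := ht
  refine ContinuousAt.continuousWithinAt ?_
  have h1 : ContinuousAt (fun t : ℝ => t ^ (α - 1)) t :=
    Real.continuousAt_rpow_const t _ (Or.inl ht0.ne')
  have h2 := contAt_q (β := β) N (b := a₀) (c := a₀ + adot)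
    (by linarith) (by linarith)
  have : ContinuousAt (fun t : ℝ => t ^ (α - 1) * (Real.exp (-β * t) *
      (Real.Gamma (t + a₀) / Real.Gamma (t + (a₀ + adot))) ^ N)) t := h1.mul h2
  simpa [mul_assoc, add_assoc] using this

lemma int_rpow_exp {s β : ℝ} (hs : -1 < s) (hβ : 0 < β) :
    IntegrableOn (fun t : ℝ => t ^ s * Real.exp (-β * t)) (Ioi 0) := by
  have := integrableOn_rpow_mul_exp_neg_mul_rpow hs zero_lt_one hβ
  simpa [Real.rpow_one] using this

end PriorPropAux

open PriorPropAux

/-- Propriety of the hierarchical shrinkage prior with `g ≡ 1`, `β > 0`. -/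
theorem prior_propriety (N : ℕ) (hN : 0 < N) (α β a₀ adot : ℝ)
    (hα : 0 < α) (hβ : 0 < β) (ha₀ : 0 ≤ a₀) (hadot : 0 < adot) :
    IntegrableOn
        (fun t : ℝ => t ^ (α - 1) * Real.exp (-β * t) *
          (Real.Gamma (t + a₀) / Real.Gamma (t + a₀ + adot)) ^ N)
        (Set.Ioi 0) ↔
      (0 < a₀ ∨ (a₀ = 0 ∧ (N : ℝ) < α)) := by
  set g : ℝ → ℝ := fun t : ℝ => t ^ (α - 1) * Real.exp (-β * t) *
      (Real.Gamma (t + a₀) / Real.Gamma (t + a₀ + adot)) ^ N with hg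
  have hmeasIoi : AEStronglyMeasurable g (volume.restrict (Ioi 0)) :=
    (g_contOn N α β a₀ adot ha₀ hadot).aestronglyMeasurable measurableSet_Ioi
  have hgpos : ∀ t : ℝ, 0 < t → 0 < g t := by
    intro t ht
    have h1 : 0 < t + a₀ := by linarith
    have h2 : 0 < t + a₀ + adot := by linarith
    have := Real.Gamma_pos_of_pos h1
    have := Real.Gamma_pos_of_pos h2
    have h3 : 0 < t ^ (α - 1) := Real.rpow_pos_of_pos ht _
    positivity
  -- key identity when a₀ = 0
  have key : a₀ = 0 → ∀ t : ℝ, 0 < t →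
      g t = t ^ (α - 1 - (N : ℝ)) *
        (Real.exp (-β * t) * (Real.Gamma (t + 1) / Real.Gamma (t + adot)) ^ N) := by
    intro h0 t ht
    subst h0
    have hG : Real.Gamma (t + 1) = t * Real.Gamma t := Real.Gamma_add_one ht.ne'
    have hpow : t ^ (α - 1) = t ^ (α - 1 - (N : ℝ)) * t ^ (N : ℝ) := by
      rw [← Real.rpow_add ht]; ring_nf
    have htN : t ^ (N : ℝ) = t ^ N := Real.rpow_natCast t N
    simp only [hg, add_zero, zero_add]
    rw [hG, hpow, htN, mul_div_assoc, mul_pow]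
    ring
  constructor
  · -- integrable → conclusion
    intro hInt
    by_contra hcon
    push_neg at hcon
    obtain ⟨h1, h2⟩ := hcon
    have ha0 : a₀ = 0 := le_antisymm h1 ha₀
    have hαN : α ≤ (N : ℝ) := h2 ha0
    -- minimum of q on Icc 0 1
    set q : ℝ → ℝ := fun t => Real.exp (-β * t) *
      (Real.Gamma (t + 1) / Real.Gamma (t + adot)) ^ N with hqdef
    have hqc : ContinuousOn q (Icc 0 1) := fun t ht =>
      (contAt_q N (by have := ht.1; linarith) (by have := ht.1; linarith)).continuousWithinAt
    obtain ⟨t₀, ht₀, hmin'⟩ := isCompact_Icc.exists_isMinOn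
      ⟨0, left_mem_Icc.mpr zero_le_one⟩ hqc
    have hmin : ∀ y ∈ Icc (0:ℝ) 1, q t₀ ≤ q y := fun y hy => hmin' hy
    have hc : 0 < q t₀ := by
      have h1' : 0 < t₀ + 1 := by have := ht₀.1; linarith
      have h2' : 0 < t₀ + adot := by have := ht₀.1; linarith
      have := Real.Gamma_pos_of_pos h1'
      have := Real.Gamma_pos_of_pos h2'
      simp only [hqdef]
      positivity
    have hI1 : IntegrableOn g (Ioo 0 1) := hInt.mono_set Ioo_subset_Ioi_self
    have hIrpow : IntegrableOn (fun t : ℝ => t ^ (α - 1 - (N : ℝ))) (Ioo 0 1) := by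
      refine Integrable.mono' (hI1.const_mul (q t₀)⁻¹) ?_ ?_
      · refine ContinuousOn.aestronglyMeasurable ?_ measurableSet_Ioo
        intro t ht
        exact (Real.continuousAt_rpow_const t _ (Or.inl (ne_of_gt ht.1))).continuousWithinAt
      · filter_upwards [ae_restrict_mem measurableSet_Ioo] with t ht
        have ht0 : (0:ℝ) < t := ht.1
        have hrpos : (0:ℝ) < t ^ (α - 1 - (N : ℝ)) := Real.rpow_pos_of_pos ht0 _
        rw [Real.norm_of_nonneg hrpos.le]
        have hqt : q t₀ ≤ q t := hmin t ⟨ht.1.le, ht.2.le⟩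
        have hgt : g t = t ^ (α - 1 - (N : ℝ)) * q t := key ha0 t ht0
        rw [le_inv_mul_iff₀ hc, hgt, mul_comm (q t₀)]
        exact mul_le_mul_of_nonneg_left hqt hrpos.le
    rw [intervalIntegral.integrableOn_Ioo_rpow_iff zero_lt_one] at hIrpow
    linarith
  · -- conclusion → integrable
    intro h
    have tail : IntegrableOn g (Ioi 2) := by
      refine Integrable.mono' ((int_rpow_exp (s := α - 1) (by linarith) hβ).mono_set
        (Ioi_subset_Ioi (by norm_num))) (hmeasIoi.mono_measure
        (Measure.restrict_mono (Ioi_subset_Ioi (by norm_num)) le_rfl)) ?_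
      filter_upwards [ae_restrict_mem measurableSet_Ioi] with t ht
      have ht2 : (2:ℝ) < t := ht
      have ht0 : (0:ℝ) < t := by linarith
      have hr0 : 0 ≤ Real.Gamma (t + a₀) / Real.Gamma (t + a₀ + adot) :=
        div_nonneg (Real.Gamma_pos_of_pos (by linarith)).le
          (Real.Gamma_pos_of_pos (by linarith)).le
      have hr1 : Real.Gamma (t + a₀) / Real.Gamma (t + a₀ + adot) ≤ 1 :=
        ratio_le_one hadot (by linarith)
      rw [Real.norm_of_nonneg (hgpos t ht0).le]
      simp only [hg]
      calc t ^ (α - 1) * Real.exp (-β * t) *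
            (Real.Gamma (t + a₀) / Real.Gamma (t + a₀ + adot)) ^ N
          ≤ t ^ (α - 1) * Real.exp (-β * t) * 1 := by
            refine mul_le_mul_of_nonneg_left (pow_le_one₀ hr0 hr1) ?_
            positivity
        _ = t ^ (α - 1) * Real.exp (-β * t) := by ring
    rcases h with ha | ⟨ha0, hNα⟩
    · -- a₀ > 0
      rw [show Ioi (0:ℝ) = Ioc 0 2 ∪ Ioi 2 from (Ioc_union_Ioi_eq_Ioi (by norm_num)).symm,
        integrableOn_union]
      refine ⟨?_, tail⟩
      set q : ℝ → ℝ := fun t => Real.exp (-β * t) *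
        (Real.Gamma (t + a₀) / Real.Gamma (t + (a₀ + adot))) ^ N with hqdef
      have hqc : ContinuousOn q (Icc 0 2) := fun t ht =>
        (contAt_q N (by have := ht.1; linarith) (by have := ht.1; linarith)).continuousWithinAt
      obtain ⟨C, hC⟩ := isCompact_Icc.exists_bound_of_continuousOn hqc
      have hrp : IntegrableOn (fun t : ℝ => t ^ (α - 1)) (Ioc 0 2) := by
        rw [integrableOn_Ioc_iff_integrableOn_Ioo]
        exact (intervalIntegral.integrableOn_Ioo_rpow_iff two_pos).mpr (by linarith)
      have hint : IntegrableOn (fun t : ℝ => C * t ^ (α - 1)) (Ioc 0 2) :=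
        hrp.const_mul C
      refine Integrable.mono' hint (hmeasIoi.mono_measure
        (Measure.restrict_mono Ioc_subset_Ioi_self le_rfl)) ?_
      filter_upwards [ae_restrict_mem measurableSet_Ioc] with t ht
      have ht0 : (0:ℝ) < t := ht.1
      have hgq : g t = t ^ (α - 1) * q t := by
        simp only [hg, hqdef, ← add_assoc]; ring
      rw [Real.norm_of_nonneg (hgpos t ht0).le, hgq]
      have hqC : q t ≤ C := le_trans (le_abs_self _)
        (by simpa [Real.norm_eq_abs] using hC t ⟨ht0.le, ht.2⟩)
      calc t ^ (α - 1) * q t ≤ t ^ (α - 1) * C :=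
            mul_le_mul_of_nonneg_left hqC (Real.rpow_nonneg ht0.le _)
        _ = C * t ^ (α - 1) := by ring
    · -- a₀ = 0, N < α
      subst ha0
      rw [show Ioi (0:ℝ) = Ioc 0 1 ∪ Ioi 1 from (Ioc_union_Ioi_eq_Ioi zero_le_one).symm,
        integrableOn_union]
      constructor
      · -- Ioc 0 1
        set q : ℝ → ℝ := fun t => Real.exp (-β * t) *
          (Real.Gamma (t + 1) / Real.Gamma (t + adot)) ^ N with hqdef
        have hqc : ContinuousOn q (Icc 0 1) := fun t ht =>
          (contAt_q N (by have := ht.1; linarith) (by have := ht.1; linarith)).continuousWithinAt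
        obtain ⟨C, hC⟩ := isCompact_Icc.exists_bound_of_continuousOn hqc
        have hrp : IntegrableOn (fun t : ℝ => t ^ (α - 1 - (N : ℝ))) (Ioc 0 1) := by
          rw [integrableOn_Ioc_iff_integrableOn_Ioo]
          exact (intervalIntegral.integrableOn_Ioo_rpow_iff zero_lt_one).mpr (by linarith)
        have hint : IntegrableOn (fun t : ℝ => C * t ^ (α - 1 - (N : ℝ))) (Ioc 0 1) :=
          hrp.const_mul C
        refine Integrable.mono' hint (hmeasIoi.mono_measure
          (Measure.restrict_mono Ioc_subset_Ioi_self le_rfl)) ?_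
        filter_upwards [ae_restrict_mem measurableSet_Ioc] with t ht
        have ht0 : (0:ℝ) < t := ht.1
        rw [Real.norm_of_nonneg (hgpos t ht0).le, key rfl t ht0]
        have hqC : q t ≤ C := le_trans (le_abs_self _)
          (by simpa [Real.norm_eq_abs] using hC t ⟨ht0.le, ht.2⟩)
        calc t ^ (α - 1 - (N : ℝ)) * q t ≤ t ^ (α - 1 - (N : ℝ)) * C :=
              mul_le_mul_of_nonneg_left hqC (Real.rpow_nonneg ht0.le _)
          _ = C * t ^ (α - 1 - (N : ℝ)) := by ring
      · -- Ioi 1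
        rw [show Ioi (1:ℝ) = Ioc 1 2 ∪ Ioi 2 from (Ioc_union_Ioi_eq_Ioi one_le_two).symm,
          integrableOn_union]
        refine ⟨?_, tail⟩
        have hsub : Icc (1:ℝ) 2 ⊆ Ioi 0 := fun x hx => lt_of_lt_of_le zero_lt_one hx.1
        exact (((g_contOn N α β 0 adot le_rfl hadot).mono hsub).integrableOn_Icc).mono_set
          Ioc_subset_Icc_self
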